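/- Let 𝓕 be a finite family of distinct sets with levels 𝓕₁, …, 𝓕_t as defined, let i < i' be indices, and let X, Y ∈ 𝓕 be sets of rank at most i with X ∪ Y ∈ 𝓕_{i'}. Then there exist two disjoint chains 𝓧 and 𝓨 in 𝓕, each consisting of exactly one set of each rank j for i ≤ j ≤ i'−1, such that at most one set in {X' ∪ Y' : X' ∈ 𝓧, Y' ∈ 𝓨} has rank i' and every other set of this form either has rank greater than i' or does not belong to 𝓕. -/

import Mathlib

open scoped Classical in
/-- The maximal (by inclusion) sets of a family. -/
noncomputable def maxSets (G : Finset (Finset ℕ)) : Finset (Finset ℕ) :=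
  G.filter fun X => ∀ Y ∈ G, ¬ X ⊂ Y

/-- `rem F k` is what remains of the family `F` after `k` rounds of peeling off
the maximal sets. -/
noncomputable def rem (F : Finset (Finset ℕ)) : ℕ → Finset (Finset ℕ)
  | 0 => F
  | k + 1 => rem F k \ maxSets (rem F k)

open scoped Classical in
/-- The length `t` of the longest chain (under inclusion) in the family `F`. -/
noncomputable def famHeight (F : Finset (Finset ℕ)) : ℕ :=
  (Finset.filter (fun C : Finset (Finset ℕ) => IsChain (· ⊆ ·) (C : Set (Finset ℕ))) F.powerset).sup Finset.card

/-- The `i`-th level `𝓕ᵢ` of the family `F`: with `t = famHeight F`,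
`𝓕_t` is the family of maximal sets of `F` and, downwards, `𝓕ᵢ` is the family of
maximal sets of `F \ (𝓕_{i+1} ∪ ⋯ ∪ 𝓕_t)`.  A set has *rank* `i` if it lies in
`level F i`. -/
noncomputable def level (F : Finset (Finset ℕ)) (i : ℕ) : Finset (Finset ℕ) :=
  maxSets (rem F (famHeight F - i))

/-- The auxiliary graph `H = H(F)` on the vertex set `{1, …, t}`, `t = famHeight F`:
the pair `(i, i')` with `i < i'` is an edge if there exist two disjoint chains
`X` and `Y`, each consisting of exactly one set of each rank `j` for `i ≤ j ≤ i' - 1`,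
such that at most one set in `{X j ∪ Y k}` has rank `i'` and every other set of this
form has rank greater than `i'` or does not belong to `F`. -/
def HEdge (F : Finset (Finset ℕ)) (i i' : ℕ) : Prop :=
  1 ≤ i ∧ i < i' ∧ i' ≤ famHeight F ∧
  ∃ X Y : ℕ → Finset ℕ,
    (∀ j, i ≤ j → j < i' → X j ∈ level F j) ∧
    (∀ j, i ≤ j → j < i' → Y j ∈ level F j) ∧
    (∀ j k, i ≤ j → j < k → k < i' → X j ⊂ X k) ∧
    (∀ j k, i ≤ j → j < k → k < i' → Y j ⊂ Y k) ∧
    (∀ j k, i ≤ j → j < i' → i ≤ k → k < i' → X j ≠ Y k) ∧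
    (∀ j k, i ≤ j → j < i' → i ≤ k → k < i' →
      X j ∪ Y k ∉ F ∨ X j ∪ Y k ∈ level F i' ∨
        ∃ r, i' < r ∧ r ≤ famHeight F ∧ X j ∪ Y k ∈ level F r) ∧
    (∀ j₁ k₁ j₂ k₂, i ≤ j₁ → j₁ < i' → i ≤ k₁ → k₁ < i' →
      i ≤ j₂ → j₂ < i' → i ≤ k₂ → k₂ < i' →
      X j₁ ∪ Y k₁ ∈ level F i' → X j₂ ∪ Y k₂ ∈ level F i' →
      X j₁ ∪ Y k₁ = X j₂ ∪ Y k₂)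


section Aux

open Finset

lemma mem_maxSets {G : Finset (Finset ℕ)} {X : Finset ℕ} :
    X ∈ maxSets G ↔ X ∈ G ∧ ∀ Y ∈ G, ¬ X ⊂ Y := by
  classical
  simp [maxSets]

lemma maxSets_subset (G : Finset (Finset ℕ)) : maxSets G ⊆ G := by
  classical
  exact Finset.filter_subset _ _

lemma rem_succ_eq (F : Finset (Finset ℕ)) (k : ℕ) :
    rem F (k+1) = rem F k \ maxSets (rem F k) := rfl

lemma rem_succ_subset (F : Finset (Finset ℕ)) (k : ℕ) : rem F (k+1) ⊆ rem F k := by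
  rw [rem_succ_eq]; exact Finset.sdiff_subset

lemma rem_antitone (F : Finset (Finset ℕ)) {k l : ℕ} (h : k ≤ l) : rem F l ⊆ rem F k := by
  induction l with
  | zero => simp_all
  | succ n ih =>
    rcases Nat.eq_or_lt_of_le h with h' | h'
    · subst h'; exact fun _ hx => hx
    · exact fun x hx => ih (by omega) (rem_succ_subset F n hx)

lemma rem_subset (F : Finset (Finset ℕ)) (k : ℕ) : rem F k ⊆ F :=
  rem_antitone F (Nat.zero_le k)

lemma exists_max_above (G : Finset (Finset ℕ)) (A : Finset ℕ) (hA : A ∈ G) :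
    ∃ B ∈ maxSets G, A ⊆ B := by
  classical
  have hne : (G.filter fun C => A ⊆ C).Nonempty := ⟨A, by simp [hA]⟩
  obtain ⟨B, hB, hmax⟩ : ∃ B ∈ G.filter (fun C => A ⊆ C), ∀ x ∈ G.filter (fun C => A ⊆ C), ¬ B < x := by
    obtain ⟨B, hB⟩ := Finset.exists_maximal hne
    exact ⟨B, hB.1, fun x hx hlt => hlt.not_ge (hB.2 hx hlt.le)⟩
  rw [Finset.mem_filter] at hB
  refine ⟨B, mem_maxSets.2 ⟨hB.1, fun Z hZ hBZ => ?_⟩, hB.2⟩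
  exact hmax Z (Finset.mem_filter.2 ⟨hZ, hB.2.trans hBZ.subset⟩) (by exact hBZ)

lemma step_up (F : Finset (Finset ℕ)) (m : ℕ) (A : Finset ℕ)
    (hA : A ∈ maxSets (rem F (m+1))) : ∃ B ∈ maxSets (rem F m), A ⊂ B := by
  have h1 : A ∈ rem F (m+1) := maxSets_subset _ hA
  rw [rem_succ_eq, Finset.mem_sdiff] at h1
  have h2 : ∃ C ∈ rem F m, A ⊂ C := by
    by_contra hcon
    push_neg at hcon
    exact h1.2 (mem_maxSets.2 ⟨h1.1, hcon⟩)
  obtain ⟨C, hC, hAC⟩ := h2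
  obtain ⟨B, hB, hCB⟩ := exists_max_above _ C hC
  exact ⟨B, hB, hAC.trans_subset hCB⟩

lemma chain_up (F : Finset (Finset ℕ)) :
    ∀ (d m : ℕ) (A : Finset ℕ), A ∈ maxSets (rem F (m + d)) →
      ∃ f : ℕ → Finset ℕ, f 0 = A ∧
        (∀ e, e ≤ d → f e ∈ maxSets (rem F (m + d - e))) ∧
        (∀ e e', e < e' → e' ≤ d → f e ⊂ f e') := by
  intro d
  induction d with
  | zero =>
    intro m A hA
    refine ⟨fun _ => A, rfl, ?_, ?_⟩
    · intro e he
      have : e = 0 := by omega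
      subst this
      simpa using hA
    · intro e e' h h'; omega
  | succ d ih =>
    intro m A hA
    obtain ⟨B, hB, hAB⟩ := step_up F (m + d) A hA
    obtain ⟨f, hf0, hfmem, hfch⟩ := ih m B hB
    refine ⟨fun e => if e = 0 then A else f (e-1), by simp, ?_, ?_⟩
    · intro e he
      rcases e with _ | e₀
      · simpa using hA
      · have h2 : m + (d+1) - (e₀+1) = m + d - e₀ := by omega
        simp only [Nat.succ_ne_zero, if_false, Nat.add_sub_cancel, h2]
        exact hfmem e₀ (by omega)
    · intro e e' hlt hle
      rcases e' with _ | e₁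
      · omega
      rcases e with _ | e₀
      · simp only [if_pos rfl, Nat.succ_ne_zero, if_false, Nat.add_sub_cancel]
        rcases Nat.eq_zero_or_pos e₁ with h | h
        · subst h; rwa [hf0]
        · exact hAB.trans (hf0 ▸ hfch 0 e₁ h (by omega))
      · simp only [Nat.succ_ne_zero, if_false, Nat.add_sub_cancel]
        exact hfch e₀ e₁ (by omega) (by omega)

lemma boundary {P : ℕ → Prop} (N : ℕ) (h0 : P 0) (hN : ¬ P N) :
    ∃ m, P m ∧ ¬ P (m+1) := by
  by_contra h
  push_neg at h
  have : ∀ n, P n := by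
    intro n
    induction n with
    | zero => exact h0
    | succ n ihn => exact h n ihn
  exact hN (this N)

lemma rem_card (F : Finset (Finset ℕ)) :
    ∀ k, (rem F k).Nonempty → (rem F k).card + k ≤ F.card := by
  intro k
  induction k with
  | zero => intro _; simp [rem]
  | succ n ih =>
    intro h
    have hsub : rem F (n+1) ⊆ rem F n := rem_succ_subset F n
    have hne : (rem F n).Nonempty := h.mono hsub
    have hih := ih hne
    obtain ⟨z, hz⟩ := hne
    obtain ⟨B, hB, _⟩ := exists_max_above _ z hz
    have hmne : 0 < (maxSets (rem F n)).card := Finset.card_pos.2 ⟨B, hB⟩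
    have hcard : (rem F (n+1)).card = (rem F n).card - (maxSets (rem F n)).card := by
      rw [rem_succ_eq]
      exact Finset.card_sdiff_of_subset (maxSets_subset _)
    have hdb : (maxSets (rem F n)).card ≤ (rem F n).card := Finset.card_le_card (maxSets_subset _)
    rw [hcard]
    omega

lemma exists_rank (F : Finset (Finset ℕ)) {Z : Finset ℕ} (hZ : Z ∈ F) :
    ∃ m, Z ∈ maxSets (rem F m) := by
  have hN : Z ∉ rem F (F.card + 1) := by
    intro h
    have := rem_card F (F.card + 1) ⟨Z, h⟩
    have : 0 < (rem F (F.card + 1)).card := Finset.card_pos.2 ⟨Z, h⟩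
    omega
  obtain ⟨m, hm1, hm2⟩ := boundary (P := fun k => Z ∈ rem F k) (F.card + 1) hZ hN
  refine ⟨m, ?_⟩
  by_contra hcon
  exact hm2 (by rw [rem_succ_eq]; exact Finset.mem_sdiff.2 ⟨hm1, hcon⟩)

end Aux

/-- Lemma 1: if `X, Y` are two sets of rank at most `i` whose union lies in level `i'`
(where `i < i'`), then `(i, i')` is an edge of `H`, i.e. there exist two disjoint
chains `𝓧, 𝓨`, each consisting of exactly one set of each rank `j` for
`i ≤ j ≤ i' - 1`, such that at most one set in `{X' ∪ Y' : X' ∈ 𝓧, Y' ∈ 𝓨}` has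
rank `i'` and every other set of this form has rank greater than `i'` or does not
belong to `F`. -/
theorem union_implies_edge (F : Finset (Finset ℕ)) (i i' : ℕ)
    (h1 : 1 ≤ i) (hii' : i < i') (hi't : i' ≤ famHeight F)
    (X Y : Finset ℕ) (hX : X ∈ F) (hY : Y ∈ F)
    (hrX : ∃ j, 1 ≤ j ∧ j ≤ i ∧ X ∈ level F j)
    (hrY : ∃ j, 1 ≤ j ∧ j ≤ i ∧ Y ∈ level F j)
    (hXY : X ∪ Y ∈ level F i') :
    HEdge F i i' := by
  classical
  set t := famHeight F with ht
  have hXYm : X ∪ Y ∈ maxSets (rem F (t - i')) := hXY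
  obtain ⟨jX, hjX1, hjXi, hXlev⟩ := hrX
  obtain ⟨jY, hjY1, hjYi, hYlev⟩ := hrY
  have hXlev' : X ∈ maxSets (rem F ((t - i' + 1) + (i' - 1 - jX))) := by
    have e : t - jX = (t - i' + 1) + (i' - 1 - jX) := by omega
    have : X ∈ maxSets (rem F (t - jX)) := hXlev
    rwa [e] at this
  have hYlev' : Y ∈ maxSets (rem F ((t - i' + 1) + (i' - 1 - jY))) := by
    have e : t - jY = (t - i' + 1) + (i' - 1 - jY) := by omega
    have : Y ∈ maxSets (rem F (t - jY)) := hYlev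
    rwa [e] at this
  obtain ⟨fX, hfX0, hfXmem, hfXch⟩ := chain_up F (i' - 1 - jX) (t - i' + 1) X hXlev'
  obtain ⟨fY, hfY0, hfYmem, hfYch⟩ := chain_up F (i' - 1 - jY) (t - i' + 1) Y hYlev'
  set X' : ℕ → Finset ℕ := fun j => fX (j - jX) with hX'
  set Y' : ℕ → Finset ℕ := fun k => fY (k - jY) with hY'
  have hmemX : ∀ j, i ≤ j → j < i' → X' j ∈ maxSets (rem F (t - j)) := by
    intro j hij hji'
    have h := hfXmem (j - jX) (by omega)
    have e : (t - i' + 1) + (i' - 1 - jX) - (j - jX) = t - j := by omega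
    rwa [e] at h
  have hmemY : ∀ k, i ≤ k → k < i' → Y' k ∈ maxSets (rem F (t - k)) := by
    intro k hik hki'
    have h := hfYmem (k - jY) (by omega)
    have e : (t - i' + 1) + (i' - 1 - jY) - (k - jY) = t - k := by omega
    rwa [e] at h
  have hsubX : ∀ j, i ≤ j → j < i' → X ⊆ X' j := by
    intro j hij hji'
    rcases Nat.eq_zero_or_pos (j - jX) with h | h
    · show X ⊆ fX (j - jX)
      rw [h, hfX0]
    · exact (hfX0 ▸ hfXch 0 (j - jX) h (by omega)).subset
  have hsubY : ∀ k, i ≤ k → k < i' → Y ⊆ Y' k := by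
    intro k hik hki'
    rcases Nat.eq_zero_or_pos (k - jY) with h | h
    · show Y ⊆ fY (k - jY)
      rw [h, hfY0]
    · exact (hfY0 ▸ hfYch 0 (k - jY) h (by omega)).subset
  have hWmax : ∀ Z ∈ rem F (t - i'), ¬ X ∪ Y ⊂ Z := (mem_maxSets.1 hXYm).2
  have hWnot : X ∪ Y ∉ rem F (t - i' + 1) := by
    intro h
    rw [rem_succ_eq] at h
    exact (Finset.mem_sdiff.1 h).2 hXYm
  refine ⟨h1, hii', hi't, X', Y', ?_, ?_, ?_, ?_, ?_, ?_, ?_⟩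
  · intro j hij hji'; exact hmemX j hij hji'
  · intro k hik hki'; exact hmemY k hik hki'
  · intro j k hij hjk hki'
    show fX (j - jX) ⊂ fX (k - jX)
    exact hfXch (j - jX) (k - jX) (by omega) (by omega)
  · intro j k hij hjk hki'
    show fY (j - jY) ⊂ fY (k - jY)
    exact hfYch (j - jY) (k - jY) (by omega) (by omega)
  · intro j k hij hji' hik hki' heq
    have hU : X' j ∈ rem F (t - j) := maxSets_subset _ (hmemX j hij hji')
    have hU1 : X' j ∈ rem F (t - i' + 1) := rem_antitone F (by omega) hU
    have hU0 : X' j ∈ rem F (t - i') := rem_antitone F (by omega) hU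
    have hWsub : X ∪ Y ⊆ X' j :=
      Finset.union_subset (hsubX j hij hji') (heq ▸ hsubY k hik hki')
    have hWeq : X ∪ Y = X' j := by
      by_contra hne
      exact hWmax _ hU0 (Finset.ssubset_iff_subset_ne.2 ⟨hWsub, hne⟩)
    exact hWnot (hWeq ▸ hU1)
  · intro j k hij hji' hik hki'
    by_cases hUF : X' j ∪ Y' k ∈ F
    · right
      have hWsub : X ∪ Y ⊆ X' j ∪ Y' k :=
        Finset.union_subset_union (hsubX j hij hji') (hsubY k hik hki')
      by_cases heq : X ∪ Y = X' j ∪ Y' k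
      · left; rw [← heq]; exact hXY
      · right
        obtain ⟨m, hm⟩ := exists_rank F hUF
        have hmlt : m < t - i' := by
          by_contra hge
          push_neg at hge
          have : X' j ∪ Y' k ∈ rem F (t - i') :=
            rem_antitone F hge (maxSets_subset _ hm)
          exact hWmax _ this (Finset.ssubset_iff_subset_ne.2 ⟨hWsub, heq⟩)
        refine ⟨t - m, by omega, by omega, ?_⟩
        show X' j ∪ Y' k ∈ maxSets (rem F (t - (t - m)))
        have e : t - (t - m) = m := by omega
        rwa [e]
    · left; exact hUF
  · intro j₁ k₁ j₂ k₂ hj₁ hj₁' hk₁ hk₁' hj₂ hj₂' hk₂ hk₂' hl₁ hl₂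
    have key : ∀ j k, i ≤ j → j < i' → i ≤ k → k < i' →
        X' j ∪ Y' k ∈ level F i' → X' j ∪ Y' k = X ∪ Y := by
      intro j k hij hji' hik hki' hl
      have hmem : X' j ∪ Y' k ∈ rem F (t - i') :=
        maxSets_subset _ (show X' j ∪ Y' k ∈ maxSets (rem F (t - i')) from hl)
      have hWsub : X ∪ Y ⊆ X' j ∪ Y' k :=
        Finset.union_subset_union (hsubX j hij hji') (hsubY k hik hki')
      by_contra hne
      exact hWmax _ hmem (Finset.ssubset_iff_subset_ne.2 ⟨hWsub, fun h => hne h.symm⟩)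
    rw [key j₁ k₁ hj₁ hj₁' hk₁ hk₁' hl₁, key j₂ k₂ hj₂ hj₂' hk₂ hk₂' hl₂]
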